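/- Let T be an N×N real symmetric positive definite matrix and let c > 0 be a real number. Then the supremum over all N×N real symmetric positive definite matrices M of det(M)^(−c) · exp(−(1/2)·Tr(M⁻¹ T)) equals (2c)^(cN) · det(T)^(−c) · e^(−cN); in particular this supremum is proportional to det(T)^(−c). -/

import Mathlib

open Matrix

-- scalar lemma
lemma scalar_bound {c x : ℝ} (hc : 0 < c) (hx : 0 < x) :
    x ^ c * Real.exp (-(1/2) * x) ≤ (2*c) ^ c * Real.exp (-c) := by
  have h2c : (0:ℝ) < 2*c := by linarith
  have hlog : Real.log (x / (2*c)) ≤ x/(2*c) - 1 :=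
    Real.log_le_sub_one_of_pos (by positivity)
  rw [Real.log_div hx.ne' h2c.ne'] at hlog
  have hmul : c * (x / (2*c)) = x / 2 := by field_simp
  have key : c * Real.log x + (-(1/2) * x) ≤ c * Real.log (2*c) + (-c) := by
    have := mul_le_mul_of_nonneg_left hlog hc.le
    rw [mul_sub, mul_sub, hmul, mul_one] at this
    linarith
  calc x ^ c * Real.exp (-(1/2) * x)
      = Real.exp (c * Real.log x + (-(1/2) * x)) := by
        rw [Real.exp_add, Real.rpow_def_of_pos hx, mul_comm (Real.log x)]
    _ ≤ Real.exp (c * Real.log (2*c) + (-c)) := Real.exp_le_exp.2 key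
    _ = (2*c) ^ c * Real.exp (-c) := by
        rw [Real.exp_add, Real.rpow_def_of_pos h2c, mul_comm (Real.log (2*c))]

-- trace = sum eigenvalues (real case)
lemma trace_eq_sum_eig {n : Type*} [Fintype n] [DecidableEq n] {A : Matrix n n ℝ}
    (hA : A.IsHermitian) : A.trace = ∑ i, hA.eigenvalues i := by
  rw [hA.trace_eq_sum_eigenvalues]
  simp

lemma key_bound {N : ℕ} {A : Matrix (Fin N) (Fin N) ℝ} (hA : A.PosDef) {c : ℝ} (hc : 0 < c) :
    A.det ^ c * Real.exp (-(1/2) * A.trace) ≤ (2*c) ^ (c * (N:ℝ)) * Real.exp (-(c * (N:ℝ))) := by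
  have hdet : A.det = ∏ i, hA.1.eigenvalues i := by
    rw [hA.1.det_eq_prod_eigenvalues]; norm_num
  have heig : ∀ i, 0 < hA.1.eigenvalues i := hA.eigenvalues_pos
  rw [hdet, trace_eq_sum_eig hA.1]
  rw [← Real.finset_prod_rpow _ _ (fun i _ => (heig i).le)]
  have : -(1/2) * ∑ i, hA.1.eigenvalues i = ∑ i, -(1/2) * hA.1.eigenvalues i := by
    rw [Finset.mul_sum]
  rw [this, Real.exp_sum, ← Finset.prod_mul_distrib]
  have hle : ∏ i, (hA.1.eigenvalues i ^ c * Real.exp (-(1/2) * hA.1.eigenvalues i)) ≤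
      ∏ _i : Fin N, ((2*c) ^ c * Real.exp (-c)) := by
    apply Finset.prod_le_prod
    · intro i _
      exact mul_nonneg (Real.rpow_nonneg (heig i).le c) (Real.exp_nonneg _)
    · intro i _
      exact scalar_bound hc (heig i)
  refine hle.trans_eq ?_
  have h2c : (0:ℝ) < 2*c := by linarith
  rw [Finset.prod_const, Finset.card_univ, Fintype.card_fin, mul_pow,
    ← Real.rpow_natCast ((2*c) ^ c) N, ← Real.rpow_mul h2c.le,
    ← Real.exp_nat_mul]
  ring_nf

open scoped MatrixOrder in
lemma exists_sqrt_aux {N : ℕ} {T : Matrix (Fin N) (Fin N) ℝ} (hT : T.PosSemidef) :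
    ∃ B : Matrix (Fin N) (Fin N) ℝ, Bᴴ = B ∧ B * B = T :=
  ⟨CFC.sqrt T, (CFC.sqrt_nonneg T).posSemidef.1, CFC.sqrt_mul_sqrt_self T hT.nonneg⟩

/-- The supremum over positive definite `M` of `det(M)^(-c)·exp(-(1/2)Tr(M⁻¹T))`
equals `(2c)^(cN)·det(T)^(-c)·e^(-cN)`. -/
theorem covariance_ml_sup_value {N : ℕ}
    (T : Matrix (Fin N) (Fin N) ℝ) (hT : T.PosDef) (c : ℝ) (hc : 0 < c) :
    sSup {x : ℝ | ∃ M : Matrix (Fin N) (Fin N) ℝ, M.PosDef ∧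
        x = M.det ^ (-c) * Real.exp (-(1/2) * (M⁻¹ * T).trace)} =
      (2*c) ^ (c * (N : ℝ)) * T.det ^ (-c) * Real.exp (-(c * (N : ℝ))) := by
  have h2c : (0:ℝ) < 2*c := by linarith
  have hdetT : (0:ℝ) < T.det := hT.det_pos
  have hTdetU : IsUnit T.det := hdetT.ne'.isUnit
  apply IsGreatest.csSup_eq
  constructor
  · -- membership with M = (2c)⁻¹ • T
    refine ⟨(2*c)⁻¹ • T, posDef_iff_dotProduct_mulVec.mpr ⟨?_, fun x hx => ?_⟩, ?_⟩
    · show ((2*c)⁻¹ • T)ᴴ = _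
      rw [Matrix.conjTranspose_smul, hT.1.eq, star_trivial]
    · rw [smul_mulVec, dotProduct_smul, smul_eq_mul]
      exact mul_pos (by positivity) (hT.dotProduct_mulVec_pos hx)
    · have hinv : ((2*c)⁻¹ • T)⁻¹ = (2*c) • T⁻¹ := by
        apply Matrix.inv_eq_right_inv
        rw [Matrix.smul_mul, Matrix.mul_smul, smul_smul, inv_mul_cancel₀ h2c.ne',
          one_smul, Matrix.mul_nonsing_inv _ hTdetU]
      have htr : (((2*c)⁻¹ • T)⁻¹ * T).trace = 2*c*N := by
        rw [hinv, Matrix.smul_mul, Matrix.nonsing_inv_mul _ hTdetU, trace_smul,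
          trace_one, smul_eq_mul, Fintype.card_fin]
      have hdet : ((2*c)⁻¹ • T).det = ((2*c)⁻¹)^N * T.det := by
        rw [det_smul, Fintype.card_fin]

      rw [htr, hdet, Real.mul_rpow (by positivity) hdetT.le]
      have hpow : (((2*c)⁻¹)^N : ℝ) ^ (-c) = (2*c) ^ (c * (N:ℝ)) := by
        rw [← Real.rpow_natCast (2*c)⁻¹ N, ← Real.rpow_neg_one (2*c),
          ← Real.rpow_mul h2c.le, ← Real.rpow_mul h2c.le]
        ring_nf
      rw [hpow]
      ring_nf
  · rintro x ⟨M, hM, rfl⟩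
    have hMdet : (0:ℝ) < M.det := hM.det_pos
    obtain ⟨B, hBH, hBB⟩ := exists_sqrt_aux hT.posSemidef
    have hdetB : B.det * B.det = T.det := by rw [← det_mul, hBB]
    have hdetB0 : B.det ≠ 0 := by
      intro h; rw [h, mul_zero] at hdetB; exact hdetT.ne' hdetB.symm
    have hBunit : IsUnit B := (isUnit_iff_isUnit_det B).2 hdetB0.isUnit
    have hBinj := mulVec_injective_iff_isUnit.2 hBunit
    have hA : (B * M⁻¹ * B).PosDef := by
      refine posDef_iff_dotProduct_mulVec.mpr ⟨?_, fun x hx => ?_⟩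
      · have := (hM.inv.posSemidef.mul_mul_conjTranspose_same B).1
        rwa [hBH] at this
      · have hBx : B *ᵥ x ≠ 0 := fun h => hx (hBinj (by simpa using h))
        have h0 := hM.inv.dotProduct_mulVec_pos hBx
        have : B * M⁻¹ * B = Bᴴ * M⁻¹ * B := by rw [hBH]
        rw [this]
        simpa only [star_mulVec, dotProduct_mulVec, vecMul_vecMul] using h0
    have hdetMinv : M⁻¹.det = M.det⁻¹ := by
      rw [det_nonsing_inv, Ring.inverse_eq_inv']
    have hdetA : (B * M⁻¹ * B).det = T.det / M.det := by
      rw [det_mul, det_mul, hdetMinv]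
      field_simp
      linarith [hdetB]
    have htr : (M⁻¹ * T).trace = (B * M⁻¹ * B).trace := by
      rw [← hBB, ← mul_assoc, trace_mul_comm, ← mul_assoc]
    have hX : (0:ℝ) < (B * M⁻¹ * B).det := by rw [hdetA]; positivity
    have hMrw : M.det ^ (-c) = T.det ^ (-c) * (B * M⁻¹ * B).det ^ c := by
      have hM' : M.det = T.det / (B * M⁻¹ * B).det := by
        rw [hdetA]; field_simp
      rw [hM', Real.div_rpow hdetT.le hX.le, Real.rpow_neg hX.le c, div_inv_eq_mul]
    calc M.det ^ (-c) * Real.exp (-(1/2) * (M⁻¹ * T).trace)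
        = T.det ^ (-c) * ((B * M⁻¹ * B).det ^ c *
            Real.exp (-(1/2) * (B * M⁻¹ * B).trace)) := by
          rw [hMrw, htr]; ring
      _ ≤ T.det ^ (-c) * ((2*c) ^ (c * (N:ℝ)) * Real.exp (-(c * (N:ℝ)))) := by
          apply mul_le_mul_of_nonneg_left (key_bound hA hc) (Real.rpow_nonneg hdetT.le _)
      _ = (2*c) ^ (c * (N:ℝ)) * T.det ^ (-c) * Real.exp (-(c * (N:ℝ))) := by ring
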